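/- Define ξ₁ = (α_al β_ls / (α_ls(α_as+α_al))) / ((α_sa/(α_as+α_al))(1 + α_al/α_ls)) and η₁ = 1/((α_sa/(α_as+α_al))(1 + α_al/α_ls)). Then L^f = [(ρN ξ₁ - 1 - η₁) + √((ρN ξ₁ - 1 - η₁)² + 4ξ₁ρN)] / (2ξ₁(1 + α_ls/α_al)) is a positive real number, and with A^f = (α_ls/α_al)L^f, the point (A^f, L^f, 0) is an equilibrium of subsystem S₁ (the system with Q₁=0). -/

import Mathlib

/-- L^f is positive and (A^f, L^f, 0) is an equilibrium of
subsystem S₁ (Q₁ = 0). -/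
theorem stmt4_Ef_equilibrium
    (asa aas aal als acs bls bcs ρ N : ℝ)
    (hasa : 0 < asa) (haas : 0 < aas) (haal : 0 < aal)
    (hals : 0 < als) (hacs : 0 < acs) (hbls : 0 < bls) (hbcs : 0 < bcs)
    (hρ : 0 < ρ) (hρ1 : ρ < 1) (hN : 0 < N) :
    let η₁ := 1 / ((asa / (aas + aal)) * (1 + aal / als))
    let ξ₁ := (aal * bls / (als * (aas + aal))) / ((asa / (aas + aal)) * (1 + aal / als))
    let Lf := ((ρ * N * ξ₁ - 1 - η₁) +
        Real.sqrt ((ρ * N * ξ₁ - 1 - η₁) ^ 2 + 4 * ξ₁ * ρ * N)) /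
      (2 * ξ₁ * (1 + als / aal))
    let Af := (als / aal) * Lf
    0 < Lf ∧
    (asa + bls * Lf + bcs * 0) * (ρ * N - Af - Lf - 0) - (aas + aal) * Af = 0 ∧
    aal * Af - als * Lf = 0 ∧
    -acs * (0 : ℝ) = 0 := by
  intro η₁ ξ₁ Lf Af
  have hS : (0:ℝ) < aas + aal := by linarith
  have hηeq : η₁ = (aas + aal) * als / (asa * (als + aal)) := by
    show 1 / ((asa / (aas + aal)) * (1 + aal / als)) = _
    field_simp
  have hξeq : ξ₁ = aal * bls / (asa * (als + aal)) := by
    show (aal * bls / (als * (aas + aal))) / ((asa / (aas + aal)) * (1 + aal / als)) = _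
    field_simp
  have hLfv : Lf = ((ρ * N * ξ₁ - 1 - η₁) +
      Real.sqrt ((ρ * N * ξ₁ - 1 - η₁) ^ 2 + 4 * ξ₁ * ρ * N)) /
      (2 * ξ₁ * (1 + als / aal)) := rfl
  have hAf : Af = (als / aal) * Lf := rfl
  clear_value Af Lf ξ₁ η₁
  have hξ : (0:ℝ) < ξ₁ := by rw [hξeq]; positivity
  obtain ⟨b, hb⟩ : ∃ x : ℝ, x = ρ * N * ξ₁ - 1 - η₁ := ⟨_, rfl⟩
  rw [← hb] at hLfv
  obtain ⟨s, hsv⟩ : ∃ x : ℝ, x = Real.sqrt (b ^ 2 + 4 * ξ₁ * ρ * N) := ⟨_, rfl⟩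
  rw [← hsv] at hLfv
  have hs2 : s ^ 2 = b ^ 2 + 4 * ξ₁ * ρ * N := by
    rw [hsv]; exact Real.sq_sqrt (by positivity)
  have hsn : 0 ≤ s := hsv ▸ Real.sqrt_nonneg _
  have hx : 0 < b + s := by
    nlinarith [sq_nonneg (s + b), mul_pos (mul_pos hξ hρ) hN]
  have hLf0 : 0 < Lf := by
    rw [hLfv]
    apply div_pos hx
    positivity
  obtain ⟨M, hM⟩ : ∃ x : ℝ, x = (b + s) / (2 * ξ₁) := ⟨_, rfl⟩
  have hMs : 2 * ξ₁ * M = b + s := by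
    rw [hM]; field_simp
  have h4 : 4 * ξ₁ * (ξ₁ * M ^ 2 - b * M - ρ * N) = 0 := by
    linear_combination (2 * ξ₁ * M - b + s) * hMs + hs2
  have hMQ : ξ₁ * M ^ 2 = b * M + ρ * N := by
    have h4' : ξ₁ * M ^ 2 - b * M - ρ * N = 0 := by
      rcases mul_eq_zero.mp h4 with h | h
      · exact absurd h (by positivity)
      · exact h
    linarith
  have hLfM : Lf = aal * M / (aal + als) := by
    rw [hLfv, hM]
    have h1 : (1 + als / aal) ≠ 0 := by positivity
    field_simp
  have hQ : aal * bls * M ^ 2 =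
      ρ * N * aal * bls * M - asa * (als + aal) * M - (aas + aal) * als * M
        + asa * (als + aal) * ρ * N := by
    have h1 : asa * (als + aal) * ξ₁ = aal * bls := by
      rw [hξeq]; field_simp
    have h2 : asa * (als + aal) * η₁ = (aas + aal) * als := by
      rw [hηeq]; field_simp
    linear_combination (asa * (als + aal)) * hMQ + (ρ * N * M - M ^ 2) * h1 - M * h2
      + (asa * (als + aal)) * M * hb
  refine ⟨hLf0, ?_, ?_, by ring⟩
  · rw [hAf, hLfM]
    field_simp
    linear_combination (-(aal + als)) * hQ
  · rw [hAf]
    field_simp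
    ring
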